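/- Let T ≥ 2 be a natural number and let P be a PMF on {0,…,T−1} whose PMF is monotone (nondecreasing or nonincreasing) on {0,…,T−1}. Then for every integer k ≥ 2 there exists a binning of P with at most k bins whose bit cost Ĥ satisfies Ĥ − H ≤ (3·log₂(T)/(k−1))·(T/(T−1)), where H is the Shannon entropy of P. -/

import Mathlib

open Finset

/-- The weight of a bin `[p.1, p.2]` with respect to the mass function `P`. -/
noncomputable def binWeight (P : ℕ → ℝ) (p : ℕ × ℕ) : ℝ :=
  ∑ x ∈ Finset.Icc p.1 p.2, P x

/-- The bit cost of a binning `B` with respect to the mass function `P`: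
`Σ_i w_i (log₂ T_i − log₂ w_i)`, where `w_i = 0` terms vanish since `logb 2 0 = 0`. -/
noncomputable def bitCost (P : ℕ → ℝ) (B : Finset (ℕ × ℕ)) : ℝ :=
  ∑ p ∈ B, binWeight P p *
    (Real.logb 2 ((p.2 - p.1 + 1 : ℕ) : ℝ) - Real.logb 2 (binWeight P p))

/-- The Shannon entropy of `P` on `{0, …, T−1}`, with the convention `0 · log₂ 0 = 0`. -/
noncomputable def shannonEntropy (P : ℕ → ℝ) (T : ℕ) : ℝ :=
  ∑ x ∈ Finset.range T, -(P x * Real.logb 2 (P x))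

/-- `B` is a binning of `P` over the domain `{0, …, T−1}`: a finite family of
pairwise disjoint integer intervals `[a, b] ⊆ {0, …, T−1}` covering the support of `P`. -/
def IsBinning (P : ℕ → ℝ) (T : ℕ) (B : Finset (ℕ × ℕ)) : Prop :=
  (∀ p ∈ B, p.1 ≤ p.2 ∧ p.2 < T) ∧
  (∀ p ∈ B, ∀ q ∈ B, p ≠ q → Disjoint (Finset.Icc p.1 p.2) (Finset.Icc q.1 q.2)) ∧
  (∀ x < T, P x ≠ 0 → ∃ p ∈ B, x ∈ Finset.Icc p.1 p.2)

set_option maxHeartbeats 1000000 in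
/-- **Lemma 2 of the paper.** If `P` is a monotone PMF on `{0, …, T−1}` with `T ≥ 2`, then
for any `k ≥ 2` there is a binning with at most `k` bins whose bit cost `Ĥ` satisfies
`Ĥ − H ≤ (3 log₂ T / (k − 1)) · (T / (T − 1))`. -/
theorem monotone_pmf_binning_bit_cost_bound
    (T k : ℕ) (hT : 2 ≤ T) (hk : 2 ≤ k)
    (P : ℕ → ℝ) (hP0 : ∀ x, 0 ≤ P x) (hPsum : ∑ x ∈ Finset.range T, P x = 1)
    (hmono : (∀ x y, x ≤ y → y < T → P x ≤ P y) ∨ (∀ x y, x ≤ y → y < T → P y ≤ P x)) :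
    ∃ B : Finset (ℕ × ℕ), IsBinning P T B ∧ B.card ≤ k ∧
      bitCost P B - shannonEntropy P T ≤
        3 * Real.logb 2 T / ((k : ℝ) - 1) * ((T : ℝ) / ((T : ℝ) - 1)) := by
  classical
  rcases le_or_gt T k with hTk | hkT
  · refine ⟨(range T).image (fun x => (x, x)), ⟨?_, ?_, ?_⟩, ?_, ?_⟩
    · rintro p hp
      obtain ⟨x, hx, rfl⟩ := Finset.mem_image.mp hp
      exact ⟨le_refl x, Finset.mem_range.mp hx⟩
    · rintro p hp q hq hpq
      obtain ⟨x, hx, rfl⟩ := Finset.mem_image.mp hp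
      obtain ⟨y, hy, rfl⟩ := Finset.mem_image.mp hq
      simp only [Finset.Icc_self]
      rw [Finset.disjoint_singleton]
      intro h; exact hpq (by rw [h])
    · intro x hx _
      exact ⟨(x, x), Finset.mem_image.mpr ⟨x, Finset.mem_range.mpr hx, rfl⟩, by simp⟩
    · exact le_trans (Finset.card_image_le) (by simpa using hTk)
    · have hbc : bitCost P ((range T).image (fun x => (x, x))) = shannonEntropy P T := by
        rw [bitCost, Finset.sum_image (by intro x _ y _ h; exact (Prod.mk.injEq _ _ _ _).mp h |>.1)]
        rw [shannonEntropy]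
        apply Finset.sum_congr rfl
        intro x _
        have hw : binWeight P (x, x) = P x := by simp [binWeight]
        rw [hw]
        norm_num
      rw [hbc, sub_self]
      have h2 : (1:ℝ) ≤ T := by exact_mod_cast Nat.one_le_of_lt hT
      have hk1 : (1:ℝ) ≤ k := by exact_mod_cast Nat.one_le_of_lt hk
      apply mul_nonneg
      · apply div_nonneg
        · have := Real.logb_nonneg one_lt_two h2
          linarith
        · linarith
      · apply div_nonneg <;> linarith
  · classical
    set n := k - 1 with hn
    have hn1 : 1 ≤ n := by omega
    have hnk : n + 1 = k := by omega
    have hnR : (n : ℝ) = (k : ℝ) - 1 := by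
      have : (k : ℝ) = (n : ℝ) + 1 := by exact_mod_cast (hnk.symm ▸ rfl : (k:ℕ) = n + 1)
      linarith
    have hnR0 : (0:ℝ) < n := by exact_mod_cast hn1
    have hT1 : (1:ℝ) < T := by exact_mod_cast hT
    have hlogT : 0 < Real.logb 2 T := Real.logb_pos one_lt_two hT1
    set c : ℝ := 3 * Real.logb 2 T / n with hc
    have hc0 : 0 < c := by positivity
    set t : ℕ → ℝ := fun j => (2:ℝ) ^ (-(c * j)) with ht
    have ht_pos : ∀ j, 0 < t j := fun j => Real.rpow_pos_of_pos two_pos _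
    have ht0 : t 0 = 1 := by simp [ht]
    have hlogt : ∀ j, Real.logb 2 (t j) = -(c * j) :=
      fun j => Real.logb_rpow (by norm_num) (by norm_num)
    have ht_anti : ∀ i j, i ≤ j → t j ≤ t i := by
      intro i j hij
      apply Real.rpow_le_rpow_of_exponent_le one_le_two
      have hij' : (i:ℝ) ≤ j := by exact_mod_cast hij
      nlinarith
    set lo : ℕ → ℝ := fun j => if j < n then t (j+1) else 0 with hlo
    have hlo_nonneg : ∀ j, 0 ≤ lo j := by
      intro j; rw [hlo]; by_cases h : j < n <;> simp [h, (ht_pos (j+1)).le]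
    have hlo_lt : ∀ j, lo j < t j := by
      intro j; rw [hlo]
      by_cases h : j < n <;> simp only [h, if_true, if_false, ht_pos j]
      apply Real.rpow_lt_rpow_of_exponent_lt one_lt_two
      have : (0:ℝ) ≤ (j:ℝ) := by positivity
      push_cast; nlinarith
    set S : ℕ → Finset ℕ := fun j => (range T).filter (fun x => lo j < P x ∧ P x ≤ t j) with hS
    have hSmem : ∀ j x, x ∈ S j ↔ (x < T ∧ (lo j < P x ∧ P x ≤ t j)) := by
      intro j x; simp [hS, Finset.mem_filter, Finset.mem_range]
    have hS_disj : ∀ i j, i < j → j ≤ n → ∀ x, x ∈ S i → x ∈ S j → False := by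
      intro i j hij hjn x hxi hxj
      obtain ⟨-, h1, -⟩ := (hSmem i x).mp hxi
      obtain ⟨-, -, h2⟩ := (hSmem j x).mp hxj
      have hin : i < n := lt_of_lt_of_le hij hjn
      have ha : t j ≤ t (i+1) := ht_anti _ _ hij
      have hb : lo i = t (i+1) := if_pos hin
      linarith
    have hS_conv : ∀ j a b x, a ∈ S j → b ∈ S j → a ≤ x → x ≤ b → x ∈ S j := by
      intro j a b x ha hb hax hxb
      obtain ⟨haT, hal, hau⟩ := (hSmem j a).mp ha
      obtain ⟨hbT, hbl, hbu⟩ := (hSmem j b).mp hb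
      have hxT : x < T := lt_of_le_of_lt hxb hbT
      refine (hSmem j x).mpr ⟨hxT, ?_, ?_⟩
      · rcases hmono with hm | hm
        · exact lt_of_lt_of_le hal (hm a x hax hxT)
        · exact lt_of_lt_of_le hbl (hm x b hxb hbT)
      · rcases hmono with hm | hm
        · exact le_trans (hm x b hxb hbT) hbu
        · exact le_trans (hm a x hax hxT) hau
    have hP_le_one : ∀ x, x < T → P x ≤ 1 := by
      intro x hx
      rw [← hPsum]
      exact Finset.single_le_sum (fun i _ => hP0 i) (Finset.mem_range.mpr hx)
    have hcover : ∀ x, x < T → P x ≠ 0 → ∃ j, j ≤ n ∧ x ∈ S j := by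
      intro x hxT hx0
      have hx_pos : 0 < P x := lt_of_le_of_ne (hP0 x) (Ne.symm hx0)
      set j := Nat.findGreatest (fun j => P x ≤ t j) n with hj
      have hj_le : j ≤ n := Nat.findGreatest_le n
      have hj_spec : P x ≤ t j :=
        Nat.findGreatest_spec (P := fun j => P x ≤ t j) (m := 0) (Nat.zero_le n) (show P x ≤ t 0 by rw [ht0]; exact hP_le_one x hxT)
      refine ⟨j, hj_le, (hSmem j x).mpr ⟨hxT, ?_, hj_spec⟩⟩
      by_cases hjn : j < n
      · have hng := Nat.findGreatest_is_greatest (lt_add_one j) hjn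
        rw [hlo]; simp only [hjn, if_true]
        push_neg at hng
        exact hng
      · rw [hlo]; simp only [hjn, if_false]
        exact hx_pos
    set J : Finset ℕ := (range (n+1)).filter (fun j => (S j).Nonempty) with hJ
    have hJle : ∀ j ∈ J, j ≤ n := by
      intro j hj
      exact Nat.lt_succ_iff.mp (Finset.mem_range.mp (Finset.mem_filter.mp hj).1)
    have hJne : ∀ j ∈ J, (S j).Nonempty := fun j hj => (Finset.mem_filter.mp hj).2
    set g : {j // j ∈ J} → ℕ × ℕ := fun j =>
      ((S j.1).min' ((Finset.mem_filter.mp j.2).2), (S j.1).max' ((Finset.mem_filter.mp j.2).2))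
      with hg
    set B : Finset (ℕ × ℕ) := J.attach.image g with hB
    have hg1 : ∀ j : {j // j ∈ J}, (g j).1 ∈ S j.1 := by
      intro j; simp only [hg]; exact Finset.min'_mem _ _
    have hg2 : ∀ j : {j // j ∈ J}, (g j).2 ∈ S j.1 := by
      intro j; simp only [hg]; exact Finset.max'_mem _ _
    have hg_le : ∀ j : {j // j ∈ J}, (g j).1 ≤ (g j).2 := fun j => Finset.min'_le _ _ (hg2 j)
    have hIcc : ∀ j : {j // j ∈ J}, Finset.Icc (g j).1 (g j).2 = S j.1 := by
      intro j
      ext x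
      simp only [Finset.mem_Icc]
      constructor
      · rintro ⟨h1, h2⟩
        exact hS_conv _ _ _ _ (hg1 j) (hg2 j) h1 h2
      · intro hx
        exact ⟨Finset.min'_le _ _ hx, Finset.le_max' _ _ hx⟩
    have hSS_disj : ∀ i j, i ≤ n → j ≤ n → i ≠ j → Disjoint (S i) (S j) := by
      intro i j hi hj hij
      rw [Finset.disjoint_left]
      intro x hxi hxj
      rcases lt_trichotomy i j with h | h | h
      · exact hS_disj i j h hj x hxi hxj
      · exact hij h
      · exact hS_disj j i h hi x hxj hxi
    have hg_inj : ∀ a ∈ J.attach, ∀ b ∈ J.attach, g a = g b → a = b := by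
      intro a _ b _ hab
      by_contra hne
      have hne' : a.1 ≠ b.1 := fun h => hne (Subtype.ext h)
      have h1 : (g a).1 ∈ S a.1 := hg1 a
      have h2 : (g a).1 ∈ S b.1 := by rw [hab]; exact hg1 b
      exact (Finset.disjoint_left.mp
        (hSS_disj _ _ (hJle _ a.2) (hJle _ b.2) hne') h1) h2
    have hSsubT : ∀ j, S j ⊆ range T := fun j => Finset.filter_subset _ _
    refine ⟨B, ⟨?_, ?_, ?_⟩, ?_, ?_⟩
    · rintro p hp
      obtain ⟨j, -, rfl⟩ := Finset.mem_image.mp hp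
      exact ⟨hg_le j, Finset.mem_range.mp (hSsubT _ (hg2 j))⟩
    · rintro p hp q hq hpq
      obtain ⟨a, -, rfl⟩ := Finset.mem_image.mp hp
      obtain ⟨b, -, rfl⟩ := Finset.mem_image.mp hq
      have hne' : a.1 ≠ b.1 := by
        intro h
        exact hpq (congrArg g (Subtype.ext h))
      rw [hIcc a, hIcc b]
      exact hSS_disj _ _ (hJle _ a.2) (hJle _ b.2) hne'
    · intro x hxT hx0
      obtain ⟨j, hjn, hxj⟩ := hcover x hxT hx0
      have hjJ : j ∈ J := Finset.mem_filter.mpr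
        ⟨Finset.mem_range.mpr (Nat.lt_succ_of_le hjn), ⟨x, hxj⟩⟩
      refine ⟨g ⟨j, hjJ⟩, Finset.mem_image.mpr ⟨⟨j, hjJ⟩, Finset.mem_attach _ _, rfl⟩, ?_⟩
      rw [hIcc]
      exact hxj
    · calc B.card ≤ J.attach.card := Finset.card_image_le
        _ = J.card := Finset.card_attach
        _ ≤ (range (n+1)).card := Finset.card_filter_le _ _
        _ = k := by rw [Finset.card_range]; exact hnk
    · -- the entropy bound
      set w : ℕ → ℝ := fun j => ∑ x ∈ S j, P x with hw
      have hw_nonneg : ∀ j, 0 ≤ w j := fun j => Finset.sum_nonneg (fun x _ => hP0 x)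
      have hbit : bitCost P B
          = ∑ j ∈ J, w j * (Real.logb 2 (((S j).card : ℕ) : ℝ) - Real.logb 2 (w j)) := by
        simp only [hB, bitCost]
        rw [Finset.sum_image hg_inj]
        rw [← Finset.sum_attach J
          fun j => w j * (Real.logb 2 (((S j).card : ℕ) : ℝ) - Real.logb 2 (w j))]
        apply Finset.sum_congr rfl
        intro j _
        have hlen : ((g j).2 - (g j).1 + 1 : ℕ) = (S j.1).card := by
          have h := hg_le j
          rw [← hIcc j, Nat.card_Icc]
          omega
        have hbw : binWeight P (g j) = w j.1 := by
          simp only [binWeight, hw]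
          rw [hIcc j]
        rw [hbw, hlen]
      have hkey : ∀ J' : Finset ℕ, J' ⊆ range (n+1) → ∀ f : ℕ → ℝ, (∀ x, x < T → 0 ≤ f x) →
          ∑ j ∈ J', ∑ x ∈ S j, f x ≤ ∑ x ∈ range T, f x := by
        intro J' hJ' f hf
        rw [← Finset.sum_biUnion (fun i hi j hj hij => hSS_disj i j
          (Nat.lt_succ_iff.mp (Finset.mem_range.mp (hJ' hi)))
          (Nat.lt_succ_iff.mp (Finset.mem_range.mp (hJ' hj))) hij)]
        apply Finset.sum_le_sum_of_subset_of_nonneg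
        · intro x hx
          obtain ⟨j, -, hxj⟩ := Finset.mem_biUnion.mp hx
          exact hSsubT j hxj
        · intro x hx _
          exact hf x (Finset.mem_range.mp hx)
      have hHge : ∑ j ∈ J, ∑ x ∈ S j, -(P x * Real.logb 2 (P x)) ≤ shannonEntropy P T := by
        rw [shannonEntropy]
        apply hkey J (Finset.filter_subset _ _)
        intro x hxT
        rcases eq_or_lt_of_le (hP0 x) with h | h
        · rw [← h]; simp
        · have hle : Real.logb 2 (P x) ≤ 0 :=
            Real.logb_nonpos one_lt_two (hP0 x) (hP_le_one x hxT)
          nlinarith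
      have hEb : ∀ j ∈ J, w j * (Real.logb 2 (((S j).card : ℕ) : ℝ) - Real.logb 2 (w j))
          - ∑ x ∈ S j, -(P x * Real.logb 2 (P x))
          ≤ w j * (if j < n then c else Real.logb 2 T) := by
        intro j hj
        have hne := hJne j hj
        have hjn := hJle j hj
        have hw_pos : 0 < w j := Finset.sum_pos
          (fun x hx => lt_of_le_of_lt (hlo_nonneg j) ((hSmem j x).mp hx).2.1) hne
        have hL1 : 1 ≤ (S j).card := Finset.card_pos.mpr hne
        have hL1R : (1:ℝ) ≤ ((S j).card : ℝ) := by exact_mod_cast hL1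
        have hLpos : (0:ℝ) < ((S j).card : ℝ) := lt_of_lt_of_le one_pos hL1R
        have hLT : (S j).card ≤ T := by
          calc (S j).card ≤ (range T).card := Finset.card_le_card (hSsubT j)
            _ = T := Finset.card_range T
        have hsum_neg : ∑ x ∈ S j, -(P x * Real.logb 2 (P x))
            = -∑ x ∈ S j, P x * Real.logb 2 (P x) := by
          rw [Finset.sum_neg_distrib]
        by_cases hcase : j < n
        · rw [if_pos hcase]
          have hlo_j : lo j = t (j+1) := if_pos hcase
          have h1 : ∑ x ∈ S j, P x * Real.logb 2 (P x) ≤ w j * (-(c * j)) := by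
            simp only [hw]
            rw [Finset.sum_mul]
            apply Finset.sum_le_sum
            intro x hx
            obtain ⟨-, hxl, hxu⟩ := (hSmem j x).mp hx
            have hxpos : 0 < P x := lt_of_le_of_lt (hlo_nonneg j) hxl
            have hlb : Real.logb 2 (P x) ≤ Real.logb 2 (t j) :=
              Real.logb_le_logb_of_le one_lt_two hxpos hxu
            rw [hlogt j] at hlb
            exact mul_le_mul_of_nonneg_left hlb (hP0 x)
          have h2 : ((S j).card : ℝ) * t (j+1) ≤ w j := by
            simp only [hw]
            calc ((S j).card : ℝ) * t (j+1) = ∑ _x ∈ S j, t (j+1) := by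
                  rw [Finset.sum_const, nsmul_eq_mul]
              _ ≤ ∑ x ∈ S j, P x := by
                  apply Finset.sum_le_sum
                  intro x hx
                  have hxl := ((hSmem j x).mp hx).2.1
                  rw [hlo_j] at hxl
                  exact hxl.le
          have h3 : Real.logb 2 (((S j).card : ℝ) * t (j+1)) ≤ Real.logb 2 (w j) :=
            Real.logb_le_logb_of_le one_lt_two (mul_pos hLpos (ht_pos (j+1))) h2
          have h4 : Real.logb 2 (((S j).card : ℝ) * t (j+1))
              = Real.logb 2 ((S j).card) + -(c * (j+1)) := by
            rw [Real.logb_mul (ne_of_gt hLpos) (ne_of_gt (ht_pos (j+1))), hlogt]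
            push_cast
            ring
          have h5 : Real.logb 2 (((S j).card : ℕ) : ℝ) - Real.logb 2 (w j) ≤ c * ((j:ℝ)+1) := by
            rw [h4] at h3
            push_cast at h3 ⊢
            linarith
          have h6 := mul_le_mul_of_nonneg_left h5 (hw_nonneg j)
          rw [hsum_neg]
          nlinarith [h6, h1]
        · rw [if_neg hcase]
          have hlo_j : lo j = 0 := if_neg hcase
          have h1 : ∑ x ∈ S j, P x * Real.logb 2 (P x) ≤ w j * Real.logb 2 (w j) := by
            have he : w j * Real.logb 2 (w j) = ∑ x ∈ S j, P x * Real.logb 2 (w j) := by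
              simp only [hw]
              rw [Finset.sum_mul]
            rw [he]
            apply Finset.sum_le_sum
            intro x hx
            have hxl := ((hSmem j x).mp hx).2.1
            rw [hlo_j] at hxl
            have hxw : P x ≤ w j := Finset.single_le_sum (fun i _ => hP0 i) hx
            exact mul_le_mul_of_nonneg_left
              (Real.logb_le_logb_of_le one_lt_two hxl hxw) (hP0 x)
          have h2 : Real.logb 2 (((S j).card : ℕ) : ℝ) ≤ Real.logb 2 T :=
            Real.logb_le_logb_of_le one_lt_two hLpos (by exact_mod_cast hLT)
          have h3 := mul_le_mul_of_nonneg_left h2 (hw_nonneg j)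
          rw [hsum_neg]
          nlinarith [h1, h3]
      have hstep : bitCost P B - shannonEntropy P T
          ≤ ∑ j ∈ J, w j * (if j < n then c else Real.logb 2 T) := by
        calc bitCost P B - shannonEntropy P T
            ≤ (∑ j ∈ J, w j * (Real.logb 2 (((S j).card : ℕ) : ℝ) - Real.logb 2 (w j)))
              - ∑ j ∈ J, ∑ x ∈ S j, -(P x * Real.logb 2 (P x)) := by
              rw [hbit]
              linarith [hHge]
          _ = ∑ j ∈ J, (w j * (Real.logb 2 (((S j).card : ℕ) : ℝ) - Real.logb 2 (w j))
              - ∑ x ∈ S j, -(P x * Real.logb 2 (P x))) := (Finset.sum_sub_distrib _ _).symm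
          _ ≤ ∑ j ∈ J, w j * (if j < n then c else Real.logb 2 T) := Finset.sum_le_sum hEb
      have hsplit : ∑ j ∈ J, w j * (if j < n then c else Real.logb 2 T)
          = (∑ j ∈ J.filter (fun j => j < n), w j * c)
            + ∑ j ∈ J.filter (fun j => ¬ j < n), w j * Real.logb 2 T := by
        rw [← Finset.sum_filter_add_sum_filter_not J (fun j => j < n)]
        congr 1
        · apply Finset.sum_congr rfl
          intro j hj
          rw [if_pos (Finset.mem_filter.mp hj).2]
        · apply Finset.sum_congr rfl
          intro j hj
          rw [if_neg (Finset.mem_filter.mp hj).2]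
      have hpart1 : ∑ j ∈ J.filter (fun j => j < n), w j * c ≤ c := by
        have hsub : J.filter (fun j => j < n) ⊆ range (n+1) :=
          (Finset.filter_subset _ _).trans (Finset.filter_subset _ _)
        have h1 : ∑ j ∈ J.filter (fun j => j < n), w j ≤ 1 := by
          rw [← hPsum]
          simp only [hw]
          exact hkey _ hsub P (fun x _ => hP0 x)
        calc ∑ j ∈ J.filter (fun j => j < n), w j * c
            = (∑ j ∈ J.filter (fun j => j < n), w j) * c := (Finset.sum_mul _ _ _).symm
          _ ≤ 1 * c := mul_le_mul_of_nonneg_right h1 hc0.le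
          _ = c := one_mul c
      have hpart2 : ∑ j ∈ J.filter (fun j => ¬ j < n), w j * Real.logb 2 T
          ≤ (T : ℝ) * t n * Real.logb 2 T := by
        have hsub : J.filter (fun j => ¬ j < n) ⊆ {n} := by
          intro j hj
          obtain ⟨hjJ, hjn2⟩ := Finset.mem_filter.mp hj
          have := hJle j hjJ
          simp only [Finset.mem_singleton]
          omega
        have hcardn : ((S n).card : ℝ) ≤ (T : ℝ) := by
          exact_mod_cast calc (S n).card ≤ (range T).card := Finset.card_le_card (hSsubT n)
            _ = T := Finset.card_range T
        have hwn : w n ≤ (T:ℝ) * t n := by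
          simp only [hw]
          calc ∑ x ∈ S n, P x ≤ ∑ _x ∈ S n, t n :=
                Finset.sum_le_sum (fun x hx => ((hSmem n x).mp hx).2.2)
            _ = ((S n).card : ℝ) * t n := by rw [Finset.sum_const, nsmul_eq_mul]
            _ ≤ (T:ℝ) * t n := mul_le_mul_of_nonneg_right hcardn (ht_pos n).le
        calc ∑ j ∈ J.filter (fun j => ¬ j < n), w j * Real.logb 2 T
            ≤ ∑ j ∈ ({n} : Finset ℕ), w j * Real.logb 2 T :=
              Finset.sum_le_sum_of_subset_of_nonneg hsub
                (fun j _ _ => mul_nonneg (hw_nonneg j) hlogT.le)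
          _ = w n * Real.logb 2 T := Finset.sum_singleton _ _
          _ ≤ (T:ℝ) * t n * Real.logb 2 T := mul_le_mul_of_nonneg_right hwn hlogT.le
      have htn : t n = (T:ℝ) ^ (-(3:ℝ)) := by
        have hcn : c * n = 3 * Real.logb 2 T := by
          rw [hc]
          field_simp
        simp only [ht]
        rw [hcn]
        rw [show -(3 * Real.logb 2 (T:ℝ)) = Real.logb 2 (T:ℝ) * (-(3:ℝ)) by ring]
        rw [Real.rpow_mul (by norm_num : (0:ℝ) ≤ 2)]
        rw [Real.rpow_logb (by norm_num) (by norm_num) (by positivity)]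
      have hfin : c + (T:ℝ) * t n * Real.logb 2 T
          ≤ 3 * Real.logb 2 T / ((k:ℝ)-1) * ((T:ℝ)/((T:ℝ)-1)) := by
        rw [htn, ← hnR]
        have hT0 : (0:ℝ) < T := by linarith
        have hT1' : (0:ℝ) < (T:ℝ) - 1 := by linarith
        have hTn3 : (T:ℝ) * (T:ℝ) ^ (-(3:ℝ)) = ((T:ℝ)^2)⁻¹ := by
          rw [Real.rpow_neg hT0.le, show ((3:ℝ)) = ((3:ℕ):ℝ) by norm_num, Real.rpow_natCast]
          field_simp
        rw [hTn3]
        have hnT : (n:ℝ) ≤ (T:ℝ) - 2 := by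
          have h1 : n ≤ T - 2 := by omega
          have h2 : ((n:ℕ):ℝ) ≤ ((T - 2 : ℕ):ℝ) := Nat.cast_le.mpr h1
          rwa [Nat.cast_sub hT, Nat.cast_ofNat] at h2
        have heq : 3 * Real.logb 2 T / (n:ℝ) * ((T:ℝ)/((T:ℝ)-1)) - c
            = 3 * Real.logb 2 T / ((n:ℝ) * ((T:ℝ)-1)) := by
          rw [hc]
          field_simp
          ring
        have hineq : ((T:ℝ)^2)⁻¹ * Real.logb 2 T
            ≤ 3 * Real.logb 2 T / ((n:ℝ) * ((T:ℝ)-1)) := by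
          rw [inv_mul_eq_div, div_le_div_iff₀ (by positivity) (by positivity)]
          have hq : Real.logb 2 T * ((n:ℝ) * ((T:ℝ)-1)) ≤ Real.logb 2 T * (((T:ℝ)-2) * ((T:ℝ)-1)) :=
            mul_le_mul_of_nonneg_left (mul_le_mul_of_nonneg_right hnT hT1'.le) hlogT.le
          nlinarith [hq, hlogT.le, hT1]
        linarith
      calc bitCost P B - shannonEntropy P T
          ≤ ∑ j ∈ J, w j * (if j < n then c else Real.logb 2 T) := hstep
        _ = _ := hsplit
        _ ≤ c + (T:ℝ) * t n * Real.logb 2 T := add_le_add hpart1 hpart2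
        _ ≤ 3 * Real.logb 2 T / ((k:ℝ)-1) * ((T:ℝ)/((T:ℝ)-1)) := hfin
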